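/- In the extended Black–Scholes model with an earnings announcement at time T_e, for 0 ≤ t < T_e ≤ T the price of a European call with strike K > 0 and maturity T satisfies C(t, S_t) = C_BS(T−t, S_t; √(σ² + σ_e²/(T−t)), K, r), where C(t, S_t) = E[e^{−r(T−t)}(S_T − K)^+]. -/

import Mathlib

open MeasureTheory ProbabilityTheory

/-- The standard normal cumulative distribution function `Φ`. -/
noncomputable def stdNormalCDF (x : ℝ) : ℝ := ((gaussianReal 0 1) (Set.Iic x)).toReal

/-- The Black–Scholes quantity `d₁`. -/
noncomputable def d1 (τ S σ K r : ℝ) : ℝ :=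
  (Real.log (S / K) + (r + σ ^ 2 / 2) * τ) / (σ * Real.sqrt τ)

/-- The Black–Scholes quantity `d₂ = d₁ − σ√τ`. -/
noncomputable def d2 (τ S σ K r : ℝ) : ℝ := d1 τ S σ K r - σ * Real.sqrt τ

/-- The Black–Scholes call price `C_BS(τ, S; σ, K, r) = S·Φ(d₁) − K·e^{−rτ}·Φ(d₂)`. -/
noncomputable def BSCall (τ S σ K r : ℝ) : ℝ :=
  S * stdNormalCDF (d1 τ S σ K r) - K * Real.exp (-r * τ) * stdNormalCDF (d2 τ S σ K r)

open Real NNReal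
open scoped ENNReal

lemma pdf_mul_pdf (m1 m2 : ℝ) (v1 v2 : ℝ≥0) (hv1 : v1 ≠ 0) (hv2 : v2 ≠ 0) (u x : ℝ) :
    gaussianPDFReal m1 v1 x * gaussianPDFReal m2 v2 (u - x)
      = gaussianPDFReal (m1 + m2) (v1 + v2) u
        * gaussianPDFReal ((v2 * m1 + v1 * (u - m2)) / (v1 + v2)) (v1 * v2 / (v1 + v2)) x := by
  have h1 : (0:ℝ) < (v1:ℝ) := by exact_mod_cast pos_iff_ne_zero.mpr hv1
  have h2 : (0:ℝ) < (v2:ℝ) := by exact_mod_cast pos_iff_ne_zero.mpr hv2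
  have hV : (0:ℝ) < (v1:ℝ) + v2 := by linarith
  have hcast : ((v1 * v2 / (v1 + v2) : ℝ≥0) : ℝ) = (v1:ℝ) * v2 / ((v1:ℝ) + v2) := by
    push_cast; ring
  have hcastV : (((v1 + v2) : ℝ≥0) : ℝ) = (v1:ℝ) + v2 := by push_cast; ring
  simp only [gaussianPDFReal, hcast, hcastV]
  have hπ : (0:ℝ) < π := Real.pi_pos
  rw [mul_mul_mul_comm, mul_mul_mul_comm ((√(2 * π * ((v1:ℝ) + v2)))⁻¹), ← mul_inv, ← mul_inv, ← Real.sqrt_mul (by positivity), ← Real.sqrt_mul (by positivity),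
    ← Real.exp_add, ← Real.exp_add]
  have hrad : 2 * π * (v1:ℝ) * (2 * π * v2)
      = 2 * π * ((v1:ℝ) + v2) * (2 * π * ((v1:ℝ) * v2 / ((v1:ℝ) + v2))) := by
    field_simp
  rw [hrad]
  congr 2
  field_simp
  ring

lemma gaussianPDF_conv (m1 m2 : ℝ) (v1 v2 : ℝ≥0) (hv1 : v1 ≠ 0) (hv2 : v2 ≠ 0) (u : ℝ) :
    ∫⁻ x, gaussianPDF m1 v1 x * gaussianPDF m2 v2 (u - x) ∂(volume : Measure ℝ)
      = gaussianPDF (m1 + m2) (v1 + v2) u := by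
  have hvs : v1 * v2 / (v1 + v2) ≠ 0 := by
    refine div_ne_zero (mul_ne_zero hv1 hv2) ?_
    simp [hv1]
  simp only [gaussianPDF]
  have key : ∀ x : ℝ, ENNReal.ofReal (gaussianPDFReal m1 v1 x)
      * ENNReal.ofReal (gaussianPDFReal m2 v2 (u - x))
      = ENNReal.ofReal (gaussianPDFReal (m1 + m2) (v1 + v2) u)
        * ENNReal.ofReal (gaussianPDFReal ((v2 * m1 + v1 * (u - m2)) / (v1 + v2))
            (v1 * v2 / (v1 + v2)) x) := by
    intro x
    rw [← ENNReal.ofReal_mul (gaussianPDFReal_nonneg _ _ _),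
      ← ENNReal.ofReal_mul (gaussianPDFReal_nonneg _ _ _),
      pdf_mul_pdf m1 m2 v1 v2 hv1 hv2 u x]
  simp_rw [key]
  rw [lintegral_const_mul _ ((measurable_gaussianPDFReal _ _).ennreal_ofReal)]
  have := lintegral_gaussianPDF_eq_one ((v2 * m1 + v1 * (u - m2)) / (v1 + v2)) hvs
  simp only [gaussianPDF] at this
  rw [this, mul_one]

lemma gaussian_map_add {Ω : Type*} [MeasurableSpace Ω] (μ : Measure Ω) [IsProbabilityMeasure μ]
    {X Y : Ω → ℝ} (hXm : Measurable X) (hYm : Measurable Y)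
    {m1 m2 : ℝ} {v1 v2 : ℝ≥0} (hv1 : v1 ≠ 0) (hv2 : v2 ≠ 0)
    (hX : Measure.map X μ = gaussianReal m1 v1) (hY : Measure.map Y μ = gaussianReal m2 v2)
    (hindep : IndepFun X Y μ) :
    Measure.map (fun ω => X ω + Y ω) μ = gaussianReal (m1 + m2) (v1 + v2) := by
  have hV : v1 + v2 ≠ 0 := by simp [hv1]
  have hpair : Measure.map (fun ω => (X ω, Y ω)) μ
      = (gaussianReal m1 v1).prod (gaussianReal m2 v2) := by
    rw [← hX, ← hY]
    exact (indepFun_iff_map_prod_eq_prod_map_map hXm.aemeasurable hYm.aemeasurable).mp hindep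
  have hcomp : (fun ω => X ω + Y ω) = (fun p : ℝ × ℝ => p.1 + p.2) ∘ (fun ω => (X ω, Y ω)) := rfl
  rw [hcomp, ← Measure.map_map measurable_add (hXm.prodMk hYm), hpair]
  ext s hs
  rw [Measure.map_apply measurable_add hs,
    Measure.prod_apply (measurable_add hs)]
  have h1 : ∀ x : ℝ, (gaussianReal m2 v2) (Prod.mk x ⁻¹' ((fun p : ℝ × ℝ => p.1 + p.2) ⁻¹' s))
      = ∫⁻ u in s, gaussianPDF m2 v2 (u - x) := by
    intro x
    have : Prod.mk x ⁻¹' ((fun p : ℝ × ℝ => p.1 + p.2) ⁻¹' s) = (fun y => x + y) ⁻¹' s := rfl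
    rw [this, ← Measure.map_apply (measurable_const_add x) hs, gaussianReal_map_const_add,
      gaussianReal_apply _ hv2]
    congr 1 with u
    simp only [gaussianPDF, gaussianPDFReal_sub]
  simp_rw [h1]
  have hmg : Measurable fun x : ℝ => ∫⁻ u in s, gaussianPDF m2 v2 (u - x) := by
    apply Measurable.lintegral_prod_right'
      (f := fun (p : ℝ × ℝ) => gaussianPDF m2 v2 (p.2 - p.1))
    exact (measurable_gaussianPDF m2 v2).comp (measurable_snd.sub measurable_fst)
  rw [gaussianReal_of_var_ne_zero _ hv1,
    lintegral_withDensity_eq_lintegral_mul _ (measurable_gaussianPDF m1 v1) hmg]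
  simp only [Pi.mul_apply]
  have h2 : ∀ x : ℝ, gaussianPDF m1 v1 x * ∫⁻ u in s, gaussianPDF m2 v2 (u - x)
      = ∫⁻ u in s, gaussianPDF m1 v1 x * gaussianPDF m2 v2 (u - x) := by
    intro x
    exact (lintegral_const_mul _ (show Measurable fun u : ℝ => gaussianPDF m2 v2 (u - x) from
      (measurable_gaussianPDF m2 v2).comp (measurable_sub_const x))).symm
  simp_rw [h2]
  rw [lintegral_lintegral_swap]
  · have h3 : ∀ u : ℝ, ∫⁻ x, gaussianPDF m1 v1 x * gaussianPDF m2 v2 (u - x)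
        = gaussianPDF (m1 + m2) (v1 + v2) u := fun u => gaussianPDF_conv m1 m2 v1 v2 hv1 hv2 u
    simp_rw [h3]
    rw [← gaussianReal_apply _ hV]
  · apply Measurable.aemeasurable
    exact ((measurable_gaussianPDF m1 v1).comp measurable_fst).mul
      ((measurable_gaussianPDF m2 v2).comp (measurable_snd.sub measurable_fst))

lemma integral_gaussianReal_eq (m : ℝ) {v : ℝ≥0} (hv : v ≠ 0) (g : ℝ → ℝ) :
    ∫ x, g x ∂(gaussianReal m v) = ∫ x, gaussianPDFReal m v x * g x := by
  rw [gaussianReal_of_var_ne_zero _ hv]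
  have hd : gaussianPDF m v = (fun x => ((gaussianPDFReal m v x).toNNReal : ℝ≥0∞)) := rfl
  rw [hd, integral_withDensity_eq_integral_smul
    ((measurable_gaussianPDFReal m v).real_toNNReal) g]
  congr 1 with x
  rw [NNReal.smul_def, Real.coe_toNNReal _ (gaussianPDFReal_nonneg m v x), smul_eq_mul]

lemma stdNormalCDF_neg (y : ℝ) : stdNormalCDF (-y) = 1 - stdNormalCDF y := by
  have hmap : (gaussianReal 0 1).map (fun x => (-1 : ℝ) * x) = gaussianReal 0 1 := by
    have h : (.mk ((-1:ℝ)^2) (sq_nonneg _) : ℝ≥0) = 1 := by ext; norm_num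
    rw [gaussianReal_map_const_mul, h]
    norm_num
  have h1 : (gaussianReal 0 1) (Set.Iic (-y)) = (gaussianReal 0 1) (Set.Ici y) := by
    conv_lhs => rw [← hmap]
    rw [Measure.map_apply (measurable_const_mul _) measurableSet_Iic]
    congr 1
    ext x
    simp only [Set.mem_preimage, Set.mem_Iic, Set.mem_Ici]
    constructor <;> intro h <;> nlinarith
  have hsing : (gaussianReal 0 1) {y} = 0 :=
    gaussianReal_absolutelyContinuous 0 one_ne_zero (volume_singleton)
  have h2 : (gaussianReal 0 1) (Set.Iio y) = (gaussianReal 0 1) (Set.Iic y) := by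
    rw [← Set.Iic_diff_right, measure_diff_null hsing]
  have h3 : (gaussianReal 0 1) (Set.Ici y) = 1 - (gaussianReal 0 1) (Set.Iic y) := by
    rw [← Set.compl_Iio, measure_compl measurableSet_Iio (measure_ne_top _ _), measure_univ, h2]
  rw [stdNormalCDF, stdNormalCDF, h1, h3, ENNReal.toReal_sub_of_le prob_le_one (by simp)]
  simp

lemma gauss_Iic (v : ℝ≥0) (hv : v ≠ 0) (b : ℝ) :
    (gaussianReal 0 v) (Set.Iic b) = (gaussianReal 0 1) (Set.Iic (b / Real.sqrt v)) := by
  have hvpos : (0:ℝ) < (v:ℝ) := by exact_mod_cast pos_iff_ne_zero.mpr hv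
  have hs : (0:ℝ) < Real.sqrt v := Real.sqrt_pos.mpr hvpos
  have hmap : (gaussianReal 0 1).map (fun x => (Real.sqrt v : ℝ) * x) = gaussianReal 0 v := by
    have h : (.mk ((Real.sqrt v)^2) (sq_nonneg _) : ℝ≥0) = v := by
      ext; push_cast; simp [Real.sq_sqrt hvpos.le]
    rw [gaussianReal_map_const_mul, h]
    norm_num
  rw [← hmap, Measure.map_apply (measurable_const_mul _) measurableSet_Iic]
  congr 1
  ext x
  simp only [Set.mem_preimage, Set.mem_Iic]
  rw [← le_div_iff₀' hs]

lemma gauss_Ioi_toReal (v : ℝ≥0) (hv : v ≠ 0) (b : ℝ) :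
    ((gaussianReal 0 v) (Set.Ioi b)).toReal = stdNormalCDF (-b / Real.sqrt v) := by
  have h1 : (gaussianReal 0 v) (Set.Ioi b) = 1 - (gaussianReal 0 v) (Set.Iic b) := by
    rw [← Set.compl_Iic, measure_compl measurableSet_Iic (measure_ne_top _ _), measure_univ]
  rw [h1, ENNReal.toReal_sub_of_le prob_le_one (by simp), gauss_Iic v hv b]
  rw [neg_div, stdNormalCDF_neg]
  simp [stdNormalCDF]

lemma exp_mul_pdf (v : ℝ≥0) (hv : v ≠ 0) (u : ℝ) :
    gaussianPDFReal 0 v u * Real.exp u = Real.exp (v / 2) * gaussianPDFReal (v : ℝ) v u := by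
  have h1 : (0:ℝ) < (v:ℝ) := by exact_mod_cast pos_iff_ne_zero.mpr hv
  simp only [gaussianPDFReal]
  rw [mul_assoc, ← Real.exp_add, mul_left_comm, ← Real.exp_add]
  congr 2
  field_simp
  ring

lemma integrable_exp_gaussian (v : ℝ≥0) (hv : v ≠ 0) :
    Integrable Real.exp (gaussianReal 0 v) := by
  rw [gaussianReal_of_var_ne_zero _ hv]
  have hd : gaussianPDF 0 v = (fun x => ((gaussianPDFReal 0 v x).toNNReal : ℝ≥0∞)) := rfl
  rw [hd, integrable_withDensity_iff_integrable_coe_smul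
    ((measurable_gaussianPDFReal 0 v).real_toNNReal)]
  have : (fun x => ((gaussianPDFReal 0 v x).toNNReal : ℝ) • Real.exp x)
      = fun x => Real.exp (v / 2) * gaussianPDFReal (v : ℝ) v x := by
    ext x
    rw [smul_eq_mul, Real.coe_toNNReal _ (gaussianPDFReal_nonneg 0 v x), exp_mul_pdf v hv x]
  rw [this]
  exact (integrable_gaussianPDFReal _ _).const_mul _

lemma BS_core (v : ℝ≥0) (hv : v ≠ 0) {S K : ℝ} (hS : 0 < S) (hK : 0 < K) (c : ℝ) :
    ∫ u, max (S * Real.exp (c + u) - K) 0 ∂(gaussianReal 0 v)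
      = S * Real.exp (c + v / 2) * stdNormalCDF ((Real.log (S / K) + c + v) / Real.sqrt v)
        - K * stdNormalCDF ((Real.log (S / K) + c) / Real.sqrt v) := by
  have hvpos : (0:ℝ) < (v:ℝ) := by exact_mod_cast pos_iff_ne_zero.mpr hv
  set b : ℝ := Real.log (K / S) - c with hb
  have hpt : ∀ u : ℝ, max (S * Real.exp (c + u) - K) 0
      = (Set.Ioi b).indicator (fun u => S * Real.exp (c + u) - K) u := by
    intro u
    by_cases h : b < u
    · rw [Set.indicator_of_mem (Set.mem_Ioi.mpr h)]
      have hlog : Real.log (K / S) < c + u := by simp only [hb] at h; linarith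
      have h2 : K / S < Real.exp (c + u) := (Real.log_lt_iff_lt_exp (by positivity)).mp hlog
      have h3 : K < S * Real.exp (c + u) := by
        calc K = S * (K / S) := by field_simp
        _ < S * Real.exp (c + u) := (mul_lt_mul_iff_right₀ hS).mpr h2
      exact max_eq_left (by linarith)
    · rw [Set.indicator_of_notMem (by simpa using h)]
      push_neg at h
      refine max_eq_right ?_
      have h2 : Real.exp (c + u) ≤ K / S := by
        rw [← Real.exp_log (show (0:ℝ) < K / S by positivity)]
        exact Real.exp_le_exp.mpr (by simp only [hb] at h; linarith)
      have : S * Real.exp (c + u) ≤ S * (K / S) := (mul_le_mul_iff_right₀ hS).mpr h2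
      have hKS : S * (K / S) = K := by field_simp
      linarith
  simp_rw [hpt]
  rw [integral_indicator measurableSet_Ioi]
  have hint_exp : Integrable (fun u => S * Real.exp c * Real.exp u) (gaussianReal 0 v) :=
    (integrable_exp_gaussian v hv).const_mul _
  have heq : ∀ u : ℝ, S * Real.exp (c + u) - K = S * Real.exp c * Real.exp u - K := by
    intro u; rw [Real.exp_add]; ring
  simp_rw [heq]
  rw [integral_sub (hint_exp.restrict) (integrable_const K)]
  rw [integral_const_mul, setIntegral_const]
  -- compute ∫ u in Ioi b, exp u ∂(gaussianReal 0 v)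
  have hexp : ∫ u in Set.Ioi b, Real.exp u ∂(gaussianReal 0 v)
      = Real.exp (v / 2) * stdNormalCDF (-(b - v) / Real.sqrt v) := by
    rw [← integral_indicator measurableSet_Ioi,
      integral_gaussianReal_eq 0 hv ((Set.Ioi b).indicator Real.exp)]
    have h1 : ∀ u : ℝ, gaussianPDFReal 0 v u * (Set.Ioi b).indicator Real.exp u
        = (Set.Ioi b).indicator (fun u => Real.exp (v/2) * gaussianPDFReal (v:ℝ) v u) u := by
      intro u
      by_cases h : u ∈ Set.Ioi b
      · rw [Set.indicator_of_mem h, Set.indicator_of_mem h, exp_mul_pdf v hv u]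
      · rw [Set.indicator_of_notMem h, Set.indicator_of_notMem h, mul_zero]
    simp_rw [h1]
    rw [integral_indicator measurableSet_Ioi, integral_const_mul]
    congr 1
    have h2 : gaussianReal (v:ℝ) v (Set.Ioi b) = gaussianReal 0 v (Set.Ioi (b - v)) := by
      have hmap : (gaussianReal 0 v).map (· + (v:ℝ)) = gaussianReal (v:ℝ) v := by
        rw [gaussianReal_map_add_const]; norm_num
      rw [← hmap, Measure.map_apply (measurable_add_const _) measurableSet_Ioi]
      congr 1
      ext x
      simp only [Set.mem_preimage, Set.mem_Ioi]
      constructor <;> intro h <;> linarith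
    have h3 := gauss_Ioi_toReal v hv (b - v)
    rw [← h2] at h3
    rw [← h3, gaussianReal_apply_eq_integral _ hv,
      ENNReal.toReal_ofReal (integral_nonneg (fun x => gaussianPDFReal_nonneg _ _ _))]
  rw [hexp]
  have h4 : ((gaussianReal 0 v) (Set.Ioi b)).toReal = stdNormalCDF (-b / Real.sqrt v) :=
    gauss_Ioi_toReal v hv b
  rw [measureReal_def, h4]
  have harg1 : -(b - v) / Real.sqrt v = (Real.log (S / K) + c + v) / Real.sqrt v := by
    congr 1
    rw [hb, Real.log_div hK.ne' hS.ne', Real.log_div hS.ne' hK.ne']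
    ring
  have harg2 : -b / Real.sqrt v = (Real.log (S / K) + c) / Real.sqrt v := by
    congr 1
    rw [hb, Real.log_div hK.ne' hS.ne', Real.log_div hS.ne' hK.ne']
    ring
  rw [harg1, harg2, Real.exp_add]
  ring_nf

/-- In the extended Black–Scholes model with an earnings announcement at
time `Te`, for `0 ≤ t < Te ≤ T` the price of a European call with strike `K > 0` and
maturity `T` equals the Black–Scholes price with volatility `√(σ² + σ_e²/(T−t))`. -/
theorem extendedBS_call_price
    {Ω : Type*} [MeasurableSpace Ω] (μ : Measure Ω) [IsProbabilityMeasure μ]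
    (r σ σe t Te T S K : ℝ) (hr : 0 ≤ r) (hσ : 0 < σ) (hσe : 0 < σe)
    (hS : 0 < S) (hK : 0 < K)
    (ht : 0 ≤ t) (htTe : t < Te) (hTeT : Te ≤ T)
    (G Z : Ω → ℝ) (hGm : Measurable G) (hZm : Measurable Z)
    (hG : Measure.map G μ = gaussianReal 0 (Real.toNNReal (T - t)))
    (hZ : Measure.map Z μ = gaussianReal (-σe ^ 2 / 2) (Real.toNNReal (σe ^ 2)))
    (hindep : IndepFun G Z μ) :
    ∫ ω, Real.exp (-r * (T - t))
        * max (S * Real.exp ((r - σ ^ 2 / 2) * (T - t) + σ * G ω + Z ω) - K) 0 ∂μ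
      = BSCall (T - t) S (Real.sqrt (σ ^ 2 + σe ^ 2 / (T - t))) K r := by
  have hτ : 0 < T - t := by linarith
  set v1 : ℝ≥0 := Real.toNNReal (σ^2) * Real.toNNReal (T - t) with hv1def
  set v2 : ℝ≥0 := Real.toNNReal (σe^2) with hv2def
  have hv1ne : v1 ≠ 0 := by
    refine mul_ne_zero ?_ ?_
    · simp [Real.toNNReal_eq_zero]
      nlinarith
    · simp [Real.toNNReal_eq_zero]
      linarith
  have hv2ne : v2 ≠ 0 := by
    simp [hv2def, Real.toNNReal_eq_zero]
    nlinarith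
  have hσG : Measure.map (fun ω => σ * G ω) μ = gaussianReal 0 v1 := by
    have hcomp : (fun ω => σ * G ω) = (fun x => σ * x) ∘ G := rfl
    rw [hcomp, ← Measure.map_map (measurable_const_mul σ) hGm, hG,
      gaussianReal_map_const_mul]
    norm_num
    congr 1
    rw [hv1def]
    congr 1
    ext
    simp [Real.coe_toNNReal _ (sq_nonneg σ)]
  have hindep2 : IndepFun (fun ω => σ * G ω) Z μ :=
    hindep.comp (measurable_const_mul σ) measurable_id
  have hW : Measure.map (fun ω => σ * G ω + Z ω) μ
      = gaussianReal (0 + (-σe^2/2)) (v1 + v2) :=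
    gaussian_map_add μ (hGm.const_mul σ) hZm hv1ne hv2ne hσG hZ hindep2
  have hVcoe : ((v1 + v2 : ℝ≥0) : ℝ) = σ^2 * (T - t) + σe^2 := by
    push_cast [hv1def, hv2def]
    rw [Real.coe_toNNReal _ hτ.le, Real.coe_toNNReal _ (sq_nonneg σe),
      Real.coe_toNNReal _ (sq_nonneg σ)]
  set a : ℝ := (r - σ^2/2) * (T - t) with hadef
  set F : ℝ → ℝ := fun x => max (S * Real.exp (a + x) - K) 0 with hF
  have hFcont : Continuous F := by
    apply Continuous.max _ continuous_const
    exact ((continuous_const.mul ((continuous_const.add continuous_id).rexp)).sub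
      continuous_const)
  have hstep1 : ∀ ω, max (S * Real.exp ((r - σ ^ 2 / 2) * (T - t) + σ * G ω + Z ω) - K) 0
      = F (σ * G ω + Z ω) := by
    intro ω
    simp only [hF, hadef, add_assoc]
  rw [← hadef] at hstep1
  simp_rw [hstep1]
  rw [integral_const_mul]
  have hWm : Measurable fun ω => σ * G ω + Z ω := (hGm.const_mul σ).add hZm
  rw [← integral_map hWm.aemeasurable (hFcont.aestronglyMeasurable), hW]
  have hshift : gaussianReal (0 + (-σe^2/2)) (v1 + v2)
      = (gaussianReal 0 (v1 + v2)).map (· + (-σe^2/2)) := by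
    rw [gaussianReal_map_add_const]
  rw [hshift, integral_map (measurable_add_const _).aemeasurable hFcont.aestronglyMeasurable]
  have hstep2 : ∀ x : ℝ, F (x + (-σe^2/2)) = max (S * Real.exp ((a + (-σe^2/2)) + x) - K) 0 := by
    intro x
    simp only [hF]
    congr 2
    ring
  simp_rw [hstep2]
  rw [BS_core (v1 + v2) (by simp [hv1ne]) hS hK (a + (-σe^2/2))]
  -- final algebra
  rw [BSCall, d2, d1]
  have hsq : Real.sqrt (σ^2 + σe^2/(T-t)) * Real.sqrt (T - t)
      = Real.sqrt ((v1 + v2 : ℝ≥0) : ℝ) := by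
    rw [← Real.sqrt_mul (by positivity), hVcoe]
    congr 1
    field_simp
  have hssq : Real.sqrt (σ^2 + σe^2/(T-t)) ^ 2 = σ^2 + σe^2/(T-t) :=
    Real.sq_sqrt (by positivity)
  rw [hssq, hsq]
  have hsqrtV : (0:ℝ) < Real.sqrt ((v1 + v2 : ℝ≥0) : ℝ) := by
    rw [hVcoe]; positivity
  have hVsq : Real.sqrt ((v1 + v2 : ℝ≥0) : ℝ) * Real.sqrt ((v1 + v2 : ℝ≥0) : ℝ)
      = ((v1 + v2 : ℝ≥0) : ℝ) := Real.mul_self_sqrt (by positivity)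
  have harg1 : (Real.log (S / K) + (a + (-σe^2/2)) + ((v1+v2:ℝ≥0):ℝ)) / Real.sqrt ((v1+v2:ℝ≥0):ℝ)
      = (Real.log (S / K) + (r + (σ^2 + σe^2/(T-t)) / 2) * (T - t)) / Real.sqrt ((v1+v2:ℝ≥0):ℝ) := by
    congr 1
    rw [hVcoe, hadef]
    field_simp
    ring
  have harg2 : (Real.log (S / K) + (a + (-σe^2/2))) / Real.sqrt ((v1+v2:ℝ≥0):ℝ)
      = (Real.log (S / K) + (r + (σ^2 + σe^2/(T-t)) / 2) * (T - t)) / Real.sqrt ((v1+v2:ℝ≥0):ℝ)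
        - Real.sqrt ((v1+v2:ℝ≥0):ℝ) := by
    rw [div_sub' hsqrtV.ne']
    congr 1
    rw [hVsq, hVcoe, hadef]
    field_simp
    ring
  rw [harg1, harg2]
  have hexp : a + (-σe^2/2) + ((v1+v2:ℝ≥0):ℝ)/2 = r * (T - t) := by
    rw [hVcoe, hadef]; ring
  rw [hexp]
  have hee : Real.exp (-r*(T-t)) * Real.exp (r*(T-t)) = 1 := by
    rw [← Real.exp_add]; simp
  generalize stdNormalCDF ((Real.log (S / K) + (r + (σ ^ 2 + σe ^ 2 / (T - t)) / 2) * (T - t)) / Real.sqrt ((v1+v2:ℝ≥0):ℝ)) = A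
  generalize stdNormalCDF ((Real.log (S / K) + (r + (σ ^ 2 + σe ^ 2 / (T - t)) / 2) * (T - t)) / Real.sqrt ((v1+v2:ℝ≥0):ℝ) - Real.sqrt ((v1+v2:ℝ≥0):ℝ)) = B
  linear_combination S * A * hee
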